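/- For every β > 0 and every x ∈ ℝ, the softplus function is the convolution of ReLU with the density p_β: softplus_β(x) = ∫_ℝ p_β(ε) · relu(x − ε) dε. -/

import Mathlib

open MeasureTheory

noncomputable def softplus (β x : ℝ) : ℝ := (1 / β) * Real.log (1 + Real.exp (β * x))

noncomputable def pdens (β ε : ℝ) : ℝ :=
  β / (Real.exp (β * ε / 2) + Real.exp (-(β * ε / 2))) ^ 2

noncomputable def relu (x : ℝ) : ℝ := max x 0

noncomputable def Haux (β x t : ℝ) : ℝ :=
  (x - t) * (Real.exp (β * t) / (1 + Real.exp (β * t))) +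
    (1 / β) * Real.log (1 + Real.exp (β * t))

lemma pdens_eq (β t : ℝ) :
    pdens β t = β * Real.exp (β * t) / (1 + Real.exp (β * t)) ^ 2 := by
  unfold pdens
  have ha : Real.exp (β * t / 2) ≠ 0 := Real.exp_ne_zero _
  have ha2 : Real.exp (β * t / 2) ^ 2 = Real.exp (β * t) := by
    rw [sq, ← Real.exp_add]; ring_nf
  have hinv : Real.exp (-(β * t / 2)) = (Real.exp (β * t / 2))⁻¹ := Real.exp_neg _
  have hden : (Real.exp (β * t / 2) + Real.exp (-(β * t / 2))) ^ 2 =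
      (1 + Real.exp (β * t)) ^ 2 / Real.exp (β * t) := by
    rw [hinv, ← ha2]
    field_simp
    ring
  rw [hden, div_div_eq_mul_div]

lemma pdens_nonneg {β : ℝ} (hβ : 0 < β) (t : ℝ) : 0 ≤ pdens β t := by
  unfold pdens
  positivity

lemma hasDerivAt_Haux {β : ℝ} (hβ : 0 < β) (x t : ℝ) :
    HasDerivAt (Haux β x) (pdens β t * (x - t)) t := by
  have hE : HasDerivAt (fun t : ℝ => Real.exp (β * t)) (Real.exp (β * t) * β) t := by
    exact ((Real.hasDerivAt_exp (β * t)).comp t ((hasDerivAt_id t).const_mul β)).congr_deriv (by ring)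
  have hpos : (0 : ℝ) < 1 + Real.exp (β * t) := by positivity
  have hden : HasDerivAt (fun t : ℝ => 1 + Real.exp (β * t)) (Real.exp (β * t) * β) t := by
    exact hE.const_add 1
  have hσ : HasDerivAt (fun t : ℝ => Real.exp (β * t) / (1 + Real.exp (β * t)))
      ((Real.exp (β * t) * β * (1 + Real.exp (β * t)) -
        Real.exp (β * t) * (Real.exp (β * t) * β)) / (1 + Real.exp (β * t)) ^ 2) t :=
    hE.div hden hpos.ne'
  have h1 : HasDerivAt (fun t : ℝ => (x - t) * (Real.exp (β * t) / (1 + Real.exp (β * t))))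
      ((-1) * (Real.exp (β * t) / (1 + Real.exp (β * t))) +
        (x - t) * ((Real.exp (β * t) * β * (1 + Real.exp (β * t)) -
          Real.exp (β * t) * (Real.exp (β * t) * β)) / (1 + Real.exp (β * t)) ^ 2)) t := by
    exact (((hasDerivAt_const t x).sub (hasDerivAt_id t)).mul hσ).congr_deriv (by simp only [Pi.sub_apply, id]; ring)
  have h2 : HasDerivAt (fun t : ℝ => (1 / β) * Real.log (1 + Real.exp (β * t)))
      ((1 / β) * (Real.exp (β * t) * β / (1 + Real.exp (β * t)))) t :=
    (hden.log hpos.ne').const_mul (1 / β)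
  have := h1.add h2
  refine this.congr_deriv ?_
  rw [pdens_eq]
  field_simp
  ring

lemma tendsto_Haux {β : ℝ} (hβ : 0 < β) (x : ℝ) :
    Filter.Tendsto (Haux β x) Filter.atBot (nhds 0) := by
  have hexp : Filter.Tendsto (fun t : ℝ => Real.exp (β * t)) Filter.atBot (nhds 0) :=
    Real.tendsto_exp_atBot.comp (Filter.tendsto_const_mul_atBot_of_pos hβ |>.2 Filter.tendsto_id)
  -- (x - t) * exp (β t) → 0 at -∞
  have key : Filter.Tendsto (fun t : ℝ => (x - t) * Real.exp (β * t)) Filter.atBot (nhds 0) := by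
    have hu : Filter.Tendsto (fun u : ℝ => x * Real.exp (-u) + (1 / β) * (u * Real.exp (-u)))
        Filter.atTop (nhds 0) := by
      have t1 : Filter.Tendsto (fun u : ℝ => x * Real.exp (-u)) Filter.atTop (nhds 0) := by
        simpa using (Real.tendsto_exp_neg_atTop_nhds_zero.const_mul x)
      have t2 : Filter.Tendsto (fun u : ℝ => u * Real.exp (-u)) Filter.atTop (nhds 0) := by
        simpa using Real.tendsto_pow_mul_exp_neg_atTop_nhds_zero 1
      simpa using t1.add (t2.const_mul (1 / β))
    have hmap : Filter.Tendsto (fun t : ℝ => -(β * t)) Filter.atBot Filter.atTop := by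
      exact Filter.tendsto_neg_atBot_atTop.comp
        (Filter.tendsto_const_mul_atBot_of_pos hβ |>.2 Filter.tendsto_id)
    have := hu.comp hmap
    refine this.congr fun t => ?_
    have hb : β ≠ 0 := hβ.ne'
    simp only [Function.comp, neg_neg]
    field_simp
    ring
  have hfrac : Filter.Tendsto (fun t : ℝ => (x - t) * (Real.exp (β * t) / (1 + Real.exp (β * t))))
      Filter.atBot (nhds 0) := by
    have hden : Filter.Tendsto (fun t : ℝ => (1 + Real.exp (β * t))⁻¹) Filter.atBot (nhds 1) := by
      have : Filter.Tendsto (fun t : ℝ => 1 + Real.exp (β * t)) Filter.atBot (nhds 1) := by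
        simpa using (tendsto_const_nhds.add hexp)
      simpa using this.inv₀ (by norm_num)
    have := key.mul hden
    simpa [mul_div_assoc, div_eq_mul_inv, mul_assoc] using this
  have hlog : Filter.Tendsto (fun t : ℝ => (1 / β) * Real.log (1 + Real.exp (β * t)))
      Filter.atBot (nhds 0) := by
    have h1 : Filter.Tendsto (fun t : ℝ => 1 + Real.exp (β * t)) Filter.atBot (nhds 1) := by
      simpa using (tendsto_const_nhds.add hexp)
    have h2 : Filter.Tendsto (fun t : ℝ => Real.log (1 + Real.exp (β * t)))
        Filter.atBot (nhds 0) := by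
      have := (Real.continuousAt_log (by norm_num : (1:ℝ) ≠ 0)).tendsto.comp h1
      simpa [Function.comp_def] using this
    simpa using h2.const_mul (1 / β)
  unfold Haux
  simpa [one_div] using hfrac.add hlog

/-- For every `β > 0` and every `x ∈ ℝ`, the softplus function is the convolution of
ReLU with the density `p_β`:  `softplus_β(x) = ∫_ℝ p_β(ε) · relu(x − ε) dε`. -/
theorem softplus_eq_integral_pdens_mul_relu (β : ℝ) (hβ : 0 < β) (x : ℝ) :
    ∫ ε : ℝ, pdens β ε * relu (x - ε) = softplus β x := by
  have hind : (fun ε : ℝ => pdens β ε * relu (x - ε)) =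
      Set.indicator (Set.Iic x) (fun ε => pdens β ε * (x - ε)) := by
    funext ε
    by_cases h : ε ≤ x
    · rw [Set.indicator_of_mem (Set.mem_Iic.2 h)]
      have : relu (x - ε) = x - ε := max_eq_left (by linarith)
      rw [this]
    · rw [Set.indicator_of_notMem (by simpa using h)]
      have : relu (x - ε) = 0 := max_eq_right (by push_neg at h; linarith)
      rw [this, mul_zero]
  rw [hind, integral_indicator measurableSet_Iic]
  have hneg := integral_comp_neg_Iic x (fun ε => pdens β (-ε) * (x - -ε))
  simp only [neg_neg] at hneg
  rw [hneg]
  -- FTC on Ioi with nonnegative derivative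
  have hder : ∀ ε ∈ Set.Ici (-x),
      HasDerivAt (fun ε : ℝ => -Haux β x (-ε)) (pdens β (-ε) * (x - -ε)) ε := by
    intro ε _
    have h1 : HasDerivAt (fun ε : ℝ => Haux β x (-ε))
        (pdens β (-ε) * (x - -ε) * (-1)) ε :=
      (hasDerivAt_Haux hβ x (-ε)).comp ε (hasDerivAt_neg ε)
    have := h1.neg
    exact this.congr_deriv (by ring)
  have hnonneg : ∀ ε ∈ Set.Ioi (-x), 0 ≤ pdens β (-ε) * (x - -ε) := by
    intro ε hε
    have : (0:ℝ) ≤ x - -ε := by simp at hε ⊢; linarith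
    exact mul_nonneg (pdens_nonneg hβ _) this
  have htend : Filter.Tendsto (fun ε : ℝ => -Haux β x (-ε)) Filter.atTop (nhds 0) := by
    have := (tendsto_Haux hβ x).comp Filter.tendsto_neg_atTop_atBot
    simpa using this.neg
  rw [integral_Ioi_of_hasDerivAt_of_nonneg' hder hnonneg htend]
  simp [Haux, softplus]
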